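/- With the setup of the directed-information identity, the variational equality holds: the directed information I(A^n → B^n) = ∑_{i=0}^n E[ log( Q_i(B_i|B^{i-1},A^i) / Π_i(B_i|B^{i-1}) ) ] equals the infimum over all families of strictly positive stochastic kernels V_i(b_i|b^{i-1}), i = 0,...,n, of ∑_{i=0}^n E[ log( Q_i(B_i|B^{i-1},A^i) / V_i(B_i|B^{i-1}) ) ], and the infimum is attained at V_i = Π_i for all i. -/

import Mathlib

open Finset

/-- Time indices `j ≤ i`. -/
def idxLe (n : ℕ) (i : Fin (n+1)) : Finset (Fin (n+1)) :=
  Finset.univ.filter fun j => (j : ℕ) ≤ (i : ℕ)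

/-- Time indices `j < i`. -/
def idxLt (n : ℕ) (i : Fin (n+1)) : Finset (Fin (n+1)) :=
  Finset.univ.filter fun j => (j : ℕ) < (i : ℕ)

/-- Time indices `i - M ≤ j < i` (the window of the last `M` outputs). -/
def idxWin (n : ℕ) (i : Fin (n+1)) (M : ℕ) : Finset (Fin (n+1)) :=
  Finset.univ.filter fun j => (j : ℕ) < (i : ℕ) ∧ (i : ℕ) ≤ (j : ℕ) + M

variable {n : ℕ} {A B : Type} [Fintype A] [Fintype B] [DecidableEq A] [DecidableEq B]

/-- Marginal of the joint pmf `μ` on the `A`-coordinates in `SA` and the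
`B`-coordinates in `SB`, evaluated at `(a, b)`. -/
noncomputable def marg (μ : (Fin (n+1) → A) → (Fin (n+1) → B) → ℝ)
    (SA SB : Finset (Fin (n+1))) (a : Fin (n+1) → A) (b : Fin (n+1) → B) : ℝ :=
  ∑ a' : Fin (n+1) → A, ∑ b' : Fin (n+1) → B,
    if (∀ j ∈ SA, a' j = a j) ∧ (∀ j ∈ SB, b' j = b j) then μ a' b' else 0

/-- Marginal of `μ` on `B`-coordinates in `SB`. -/
noncomputable def margB (μ : (Fin (n+1) → A) → (Fin (n+1) → B) → ℝ)
    (SB : Finset (Fin (n+1))) (b : Fin (n+1) → B) : ℝ :=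
  ∑ a' : Fin (n+1) → A, ∑ b' : Fin (n+1) → B,
    if ∀ j ∈ SB, b' j = b j then μ a' b' else 0

/-- The induced conditional output pmf `Π_i(b_i | b^{i-1})`. -/
noncomputable def outCond (μ : (Fin (n+1) → A) → (Fin (n+1) → B) → ℝ)
    (i : Fin (n+1)) (b : Fin (n+1) → B) : ℝ :=
  margB μ (idxLe n i) b / margB μ (idxLt n i) b

/-- Conditional mutual information `I(A_{TA}; B_i | B_{SB})` under `μ`
(terms with zero joint probability vanish). -/
noncomputable def cmi (μ : (Fin (n+1) → A) → (Fin (n+1) → B) → ℝ)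
    (TA : Finset (Fin (n+1))) (i : Fin (n+1)) (SB : Finset (Fin (n+1))) : ℝ :=
  ∑ a : Fin (n+1) → A, ∑ b : Fin (n+1) → B,
    μ a b * Real.log (marg μ TA (insert i SB) a b * marg μ ∅ SB a b /
      (marg μ TA SB a b * marg μ ∅ (insert i SB) a b))

/-- Directed information `I(A^n → B^n) = ∑_i I(A^i; B_i | B^{i-1})`. -/
noncomputable def DI (μ : (Fin (n+1) → A) → (Fin (n+1) → B) → ℝ) : ℝ :=
  ∑ i : Fin (n+1), cmi μ (idxLe n i) i (idxLt n i)

/-- A family of channel kernels `Q_i(b_i | b^{i-1}, a^i)`: nonnegative, summing to one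
over `b_i`, and depending only on `(a^i, b^i)`. -/
def IsChannel (Q : Fin (n+1) → (Fin (n+1) → A) → (Fin (n+1) → B) → ℝ) : Prop :=
  (∀ i a b, 0 ≤ Q i a b) ∧
  (∀ i a b, ∑ x : B, Q i a (Function.update b i x) = 1) ∧
  (∀ (i : Fin (n+1)) (a a' : Fin (n+1) → A) (b b' : Fin (n+1) → B),
    (∀ j : Fin (n+1), (j:ℕ) ≤ (i:ℕ) → a j = a' j) →
    (∀ j : Fin (n+1), (j:ℕ) ≤ (i:ℕ) → b j = b' j) → Q i a b = Q i a' b')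

/-- A family of feedback input kernels `P_i(a_i | a^{i-1}, b^{i-1})`: nonnegative,
summing to one over `a_i`, and depending only on `(a^i, b^{i-1})`. -/
def IsInput (P : Fin (n+1) → (Fin (n+1) → A) → (Fin (n+1) → B) → ℝ) : Prop :=
  (∀ i a b, 0 ≤ P i a b) ∧
  (∀ i a b, ∑ x : A, P i (Function.update a i x) b = 1) ∧
  (∀ (i : Fin (n+1)) (a a' : Fin (n+1) → A) (b b' : Fin (n+1) → B),
    (∀ j : Fin (n+1), (j:ℕ) ≤ (i:ℕ) → a j = a' j) →
    (∀ j : Fin (n+1), (j:ℕ) < (i:ℕ) → b j = b' j) → P i a b = P i a' b')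

/-- The joint pmf induced by channel kernels `Q` and input kernels `P`. -/
noncomputable def joint (Q P : Fin (n+1) → (Fin (n+1) → A) → (Fin (n+1) → B) → ℝ)
    (a : Fin (n+1) → A) (b : Fin (n+1) → B) : ℝ :=
  ∏ i : Fin (n+1), Q i a b * P i a b

set_option linter.unusedSectionVars false

section Helpers
variable {n : ℕ} {A B : Type} [Fintype A] [Fintype B] [DecidableEq A] [DecidableEq B]

lemma sum_pick {p : Prop} [Decidable p] (t : B) (v : B → ℝ) :
    ∑ y : B, (if p ∧ t = y then v y else 0) = if p then v t else 0 := by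
  by_cases hp : p
  · simp only [hp, true_and]
    rw [Finset.sum_ite_eq]
    simp
  · simp [hp]

lemma cond_insert {S : Finset (Fin (n+1))} {i : Fin (n+1)} (hi : i ∉ S)
    (b' b : Fin (n+1) → B) (y : B) :
    (∀ j ∈ insert i S, b' j = Function.update b i y j) ↔
      ((∀ j ∈ S, b' j = b j) ∧ b' i = y) := by
  constructor
  · intro h
    refine ⟨fun j hj => ?_, ?_⟩
    · have := h j (Finset.mem_insert_of_mem hj)
      rwa [Function.update_of_ne (by rintro rfl; exact hi hj)] at this
    · have := h i (Finset.mem_insert_self i S)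
      rwa [Function.update_self] at this
  · intro ⟨h1, h2⟩ j hj
    rcases Finset.mem_insert.mp hj with rfl | hj2
    · rwa [Function.update_self]
    · rw [Function.update_of_ne (by rintro rfl; exact hi hj2)]
      exact h1 j hj2

/-- Summing a `B`-marginal over the value of a fresh coordinate. -/
lemma margB_sum_insert (μ : (Fin (n+1) → A) → (Fin (n+1) → B) → ℝ)
    {S : Finset (Fin (n+1))} {i : Fin (n+1)} (hi : i ∉ S) (b : Fin (n+1) → B) :
    ∑ y : B, margB μ (insert i S) (Function.update b i y) = margB μ S b := by
  unfold margB
  rw [Finset.sum_comm]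
  refine Finset.sum_congr rfl fun a' _ => ?_
  rw [Finset.sum_comm]
  refine Finset.sum_congr rfl fun b' _ => ?_
  calc ∑ y : B, (if ∀ j ∈ insert i S, b' j = Function.update b i y j then μ a' b' else 0)
      = ∑ y : B, (if (∀ j ∈ S, b' j = b j) ∧ b' i = y then μ a' b' else 0) := by
        refine Finset.sum_congr rfl fun y _ => if_congr (cond_insert hi b' b y) rfl rfl
    _ = if ∀ j ∈ S, b' j = b j then μ a' b' else 0 := sum_pick _ _

end Helpers
section Helpers2
variable {n : ℕ} {A B : Type} [Fintype A] [Fintype B] [DecidableEq A] [DecidableEq B]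

/-- Number of functions agreeing with a given one on `S`. -/
def KS (S : Finset (Fin (n+1))) (B : Type) [Fintype B] : ℕ :=
  ∏ j : Fin (n+1), if j ∈ S then 1 else Fintype.card B

lemma card_agree (S : Finset (Fin (n+1))) (c : Fin (n+1) → B) :
    (Finset.univ.filter fun b : Fin (n+1) → B => ∀ j ∈ S, b j = c j).card = KS S B := by
  have h : (Finset.univ.filter fun b : Fin (n+1) → B => ∀ j ∈ S, b j = c j)
      = Fintype.piFinset (fun j => if j ∈ S then {c j} else Finset.univ) := by
    ext b
    simp only [Finset.mem_filter, Finset.mem_univ, true_and, Fintype.mem_piFinset]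
    refine forall_congr' fun j => ?_
    by_cases hj : j ∈ S <;> simp [hj]
  rw [h, Fintype.card_piFinset, KS]
  refine Finset.prod_congr rfl fun j _ => ?_
  by_cases hj : j ∈ S <;> simp [hj]

lemma KS_pos [Nonempty B] (S : Finset (Fin (n+1))) : 0 < KS S B :=
  Finset.prod_pos fun j _ => by by_cases hj : j ∈ S <;> simp [hj, Fintype.card_pos]

lemma joint_nonneg {Q P : Fin (n+1) → (Fin (n+1) → A) → (Fin (n+1) → B) → ℝ}
    (hQ : IsChannel Q) (hP : IsInput P) (a : Fin (n+1) → A) (b : Fin (n+1) → B) :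
    0 ≤ joint Q P a b :=
  Finset.prod_nonneg fun i _ => mul_nonneg (hQ.1 i a b) (hP.1 i a b)

lemma margB_nonneg {μ : (Fin (n+1) → A) → (Fin (n+1) → B) → ℝ}
    (hμ : ∀ a b, 0 ≤ μ a b) (S : Finset (Fin (n+1))) (b : Fin (n+1) → B) :
    0 ≤ margB μ S b := by
  refine Finset.sum_nonneg fun a' _ => Finset.sum_nonneg fun b' _ => ?_
  split_ifs with h
  · exact hμ a' b'
  · exact le_refl 0

lemma marg_nonneg {μ : (Fin (n+1) → A) → (Fin (n+1) → B) → ℝ}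
    (hμ : ∀ a b, 0 ≤ μ a b) (SA SB : Finset (Fin (n+1))) (a : Fin (n+1) → A)
    (b : Fin (n+1) → B) : 0 ≤ marg μ SA SB a b := by
  refine Finset.sum_nonneg fun a' _ => Finset.sum_nonneg fun b' _ => ?_
  split_ifs with h
  · exact hμ a' b'
  · exact le_refl 0

lemma margB_congr {μ : (Fin (n+1) → A) → (Fin (n+1) → B) → ℝ}
    {S : Finset (Fin (n+1))} {b b' : Fin (n+1) → B} (h : ∀ j ∈ S, b j = b' j) :
    margB μ S b = margB μ S b' := by
  unfold margB
  refine Finset.sum_congr rfl fun a' _ => Finset.sum_congr rfl fun b'' _ => ?_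
  refine if_congr (forall₂_congr fun j hj => ?_) rfl rfl
  rw [h j hj]

lemma le_margB {μ : (Fin (n+1) → A) → (Fin (n+1) → B) → ℝ}
    (hμ : ∀ a b, 0 ≤ μ a b) (S : Finset (Fin (n+1))) (a : Fin (n+1) → A)
    (b : Fin (n+1) → B) : μ a b ≤ margB μ S b := by
  have h1 : μ a b ≤ ∑ b' : Fin (n+1) → B, (if ∀ j ∈ S, b' j = b j then μ a b' else 0) := by
    have := Finset.single_le_sum (f := fun b' => if ∀ j ∈ S, b' j = b j then μ a b' else 0)
      (fun b' _ => by split_ifs with h; exacts [hμ a b', le_refl 0])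
      (Finset.mem_univ b)
    simpa using this
  unfold margB
  refine h1.trans ?_
  refine Finset.single_le_sum (f := fun a' => ∑ b' : Fin (n+1) → B,
    (if ∀ j ∈ S, b' j = b j then μ a' b' else 0)) (fun a' _ => Finset.sum_nonneg fun b' _ => ?_)
    (Finset.mem_univ a)
  split_ifs with h
  · exact hμ a' b'
  · exact le_refl 0

lemma le_marg {μ : (Fin (n+1) → A) → (Fin (n+1) → B) → ℝ}
    (hμ : ∀ a b, 0 ≤ μ a b) (SA SB : Finset (Fin (n+1))) (a : Fin (n+1) → A)
    (b : Fin (n+1) → B) : μ a b ≤ marg μ SA SB a b := by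
  have h1 : μ a b ≤ ∑ b' : Fin (n+1) → B,
      (if (∀ j ∈ SA, a j = a j) ∧ (∀ j ∈ SB, b' j = b j) then μ a b' else 0) := by
    have := Finset.single_le_sum
      (f := fun b' => if (∀ j ∈ SA, a j = a j) ∧ (∀ j ∈ SB, b' j = b j) then μ a b' else 0)
      (fun b' _ => by split_ifs with h; exacts [hμ a b', le_refl 0])
      (Finset.mem_univ b)
    simpa using this
  unfold marg
  refine h1.trans ?_
  refine Finset.single_le_sum (f := fun a' => ∑ b' : Fin (n+1) → B,
    (if (∀ j ∈ SA, a' j = a j) ∧ (∀ j ∈ SB, b' j = b j) then μ a' b' else 0))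
    (fun a' _ => Finset.sum_nonneg fun b' _ => ?_) (Finset.mem_univ a)
  split_ifs with h
  · exact hμ a' b'
  · exact le_refl 0

lemma margB_mono {μ : (Fin (n+1) → A) → (Fin (n+1) → B) → ℝ}
    (hμ : ∀ a b, 0 ≤ μ a b) {S S' : Finset (Fin (n+1))} (hSS : S ⊆ S')
    (b : Fin (n+1) → B) : margB μ S' b ≤ margB μ S b := by
  refine Finset.sum_le_sum fun a' _ => Finset.sum_le_sum fun b' _ => ?_
  split_ifs with h1 h2
  · exact le_refl _
  · exact absurd (fun j hj => h1 j (hSS hj)) h2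
  · exact hμ a' b'
  · exact le_refl 0

lemma marg_empty (μ : (Fin (n+1) → A) → (Fin (n+1) → B) → ℝ)
    (S : Finset (Fin (n+1))) (a : Fin (n+1) → A) (b : Fin (n+1) → B) :
    marg μ ∅ S a b = margB μ S b := by
  unfold marg margB
  refine Finset.sum_congr rfl fun a' _ => Finset.sum_congr rfl fun b' _ => ?_
  refine if_congr ?_ rfl rfl
  simp

end Helpers2
section Helpers3
variable {n : ℕ} {A B : Type} [Fintype A] [Fintype B] [DecidableEq A] [DecidableEq B]

lemma mem_idxLe {i j : Fin (n+1)} : j ∈ idxLe n i ↔ (j:ℕ) ≤ (i:ℕ) := by simp [idxLe]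

lemma mem_idxLt {i j : Fin (n+1)} : j ∈ idxLt n i ↔ (j:ℕ) < (i:ℕ) := by simp [idxLt]

lemma i_not_mem_idxLt {i : Fin (n+1)} : i ∉ idxLt n i := by simp [idxLt]

lemma idxLe_eq_insert (i : Fin (n+1)) : idxLe n i = insert i (idxLt n i) := by
  ext j
  simp only [mem_idxLe, Finset.mem_insert, mem_idxLt, Fin.ext_iff]
  omega

lemma sum_agree_const (S : Finset (Fin (n+1))) (c : Fin (n+1) → B)
    (g : (Fin (n+1) → B) → ℝ) (hg : ∀ b, (∀ j ∈ S, b j = c j) → g b = g c) :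
    ∑ b : Fin (n+1) → B, (if ∀ j ∈ S, b j = c j then g b else 0) = (KS S B : ℝ) * g c := by
  have h1 : ∀ b : Fin (n+1) → B, (if ∀ j ∈ S, b j = c j then g b else 0)
      = (if ∀ j ∈ S, b j = c j then g c else 0) := fun b => by
    split_ifs with h
    · rw [hg b h]
    · rfl
  rw [Finset.sum_congr rfl fun b _ => h1 b, ← Finset.sum_filter, Finset.sum_const,
    card_agree, nsmul_eq_mul]

/-- Key marginal-averaging identity. -/
lemma sum_margB_mul (μ : (Fin (n+1) → A) → (Fin (n+1) → B) → ℝ)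
    (S : Finset (Fin (n+1))) (f : (Fin (n+1) → B) → ℝ)
    (hf : ∀ b b', (∀ j ∈ S, b j = b' j) → f b = f b') :
    ∑ b : Fin (n+1) → B, margB μ S b * f b
      = (KS S B : ℝ) * ∑ a : Fin (n+1) → A, ∑ b : Fin (n+1) → B, μ a b * f b := by
  unfold margB
  have h1 : ∀ b : Fin (n+1) → B,
      (∑ a' : Fin (n+1) → A, ∑ b' : Fin (n+1) → B,
        if ∀ j ∈ S, b' j = b j then μ a' b' else 0) * f b
      = ∑ a' : Fin (n+1) → A, ∑ b' : Fin (n+1) → B,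
        (if ∀ j ∈ S, b j = b' j then μ a' b' * f b else 0) := by
    intro b
    rw [Finset.sum_mul]
    refine Finset.sum_congr rfl fun a' _ => ?_
    rw [Finset.sum_mul]
    refine Finset.sum_congr rfl fun b' _ => ?_
    rw [ite_mul, zero_mul]
    refine if_congr (forall₂_congr fun j hj => eq_comm) rfl rfl
  rw [Finset.sum_congr rfl fun b _ => h1 b, Finset.sum_comm]
  rw [Finset.mul_sum]
  refine Finset.sum_congr rfl fun a' _ => ?_
  rw [Finset.sum_comm, Finset.mul_sum]
  refine Finset.sum_congr rfl fun b' _ => ?_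
  have := sum_agree_const S b' (fun b => μ a' b' * f b)
    (fun b hb => by rw [hf b b' hb])
  rw [this]

/-- Normalization of a positive output kernel against the `< i` marginal. -/
lemma sum_V_kernel (i : Fin (n+1)) (V : (Fin (n+1) → B) → ℝ)
    (hV2 : ∀ b, ∑ y : B, V (Function.update b i y) = 1)
    (hV3 : ∀ b b' : Fin (n+1) → B, (∀ j : Fin (n+1), (j:ℕ) ≤ (i:ℕ) → b j = b' j) → V b = V b')
    (b' : Fin (n+1) → B) :
    ∑ b : Fin (n+1) → B, (if ∀ j ∈ idxLt n i, b j = b' j then V b else 0)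
      = (KS (idxLe n i) B : ℝ) := by
  have step : ∀ b : Fin (n+1) → B, (if ∀ j ∈ idxLt n i, b j = b' j then V b else 0)
      = ∑ y : B, (if ∀ j ∈ idxLe n i, b j = Function.update b' i y j then V b else 0) := by
    intro b
    have h2 : ∀ y : B, (∀ j ∈ idxLe n i, b j = Function.update b' i y j)
        ↔ ((∀ j ∈ idxLt n i, b j = b' j) ∧ b i = y) := by
      intro y
      rw [idxLe_eq_insert i]
      exact cond_insert i_not_mem_idxLt b b' y
    rw [Finset.sum_congr rfl fun y _ => if_congr (h2 y) rfl rfl]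
    exact (sum_pick (b i) (fun _ => V b)).symm
  rw [Finset.sum_congr rfl fun b _ => step b, Finset.sum_comm]
  have h3 : ∀ y : B, ∑ b : Fin (n+1) → B,
      (if ∀ j ∈ idxLe n i, b j = Function.update b' i y j then V b else 0)
      = (KS (idxLe n i) B : ℝ) * V (Function.update b' i y) := by
    intro y
    exact sum_agree_const (idxLe n i) (Function.update b' i y) V
      (fun b hb => hV3 b _ (fun j hj => hb j (mem_idxLe.mpr hj)))
  rw [Finset.sum_congr rfl fun y _ => h3 y, ← Finset.mul_sum, hV2 b', mul_one]

end Helpers3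
section Chain
variable {n : ℕ} {A B : Type} [Fintype A] [Fintype B] [DecidableEq A] [DecidableEq B]

/-- Marginal with "prefix" constraints given by bare bounds. -/
noncomputable def cmarg (μ : (Fin (n+1) → A) → (Fin (n+1) → B) → ℝ) (ma mb : ℕ)
    (a : Fin (n+1) → A) (b : Fin (n+1) → B) : ℝ :=
  ∑ a' : Fin (n+1) → A, ∑ b' : Fin (n+1) → B,
    if (∀ j : Fin (n+1), (j:ℕ) < ma → a' j = a j) ∧ (∀ j : Fin (n+1), (j:ℕ) < mb → b' j = b j)
    then μ a' b' else 0

lemma cond_split {C : Type} {m : ℕ} (hm : m < n + 1) (f g : Fin (n+1) → C) (y : C) :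
    (∀ j : Fin (n+1), (j:ℕ) < m + 1 → f j = Function.update g ⟨m, hm⟩ y j)
      ↔ ((∀ j : Fin (n+1), (j:ℕ) < m → f j = g j) ∧ f ⟨m, hm⟩ = y) := by
  constructor
  · intro h
    refine ⟨fun j hj => ?_, ?_⟩
    · have h2 := h j (by omega)
      rwa [Function.update_of_ne (Fin.ne_of_val_ne (i := j) (j := ⟨m, hm⟩) (show (j:ℕ) ≠ m by omega))] at h2
    · have h2 := h ⟨m, hm⟩ (by simp)
      rwa [Function.update_self] at h2
  · rintro ⟨h1, h2⟩ j hj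
    by_cases hji : (j:ℕ) < m
    · rw [Function.update_of_ne (Fin.ne_of_val_ne (by simpa using Nat.ne_of_lt hji))]
      exact h1 j hji
    · have : j = ⟨m, hm⟩ := Fin.ext (show (j:ℕ) = m by omega)
      subst this
      rwa [Function.update_self]

lemma filter_lt_succ {m : ℕ} (hm : m < n + 1) :
    (Finset.univ.filter fun j : Fin (n+1) => (j:ℕ) < m + 1)
      = insert ⟨m, hm⟩ (Finset.univ.filter fun j : Fin (n+1) => (j:ℕ) < m) := by
  ext j
  simp only [Finset.mem_filter, Finset.mem_univ, true_and, Finset.mem_insert, Fin.ext_iff]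
  omega

lemma not_mem_filter_lt {m : ℕ} (hm : m < n + 1) :
    (⟨m, hm⟩ : Fin (n+1)) ∉ Finset.univ.filter fun j : Fin (n+1) => (j:ℕ) < m := by
  simp

/-- Chain rule for the prefix marginals of the joint pmf. -/
lemma chainA {Q P : Fin (n+1) → (Fin (n+1) → A) → (Fin (n+1) → B) → ℝ}
    (hQ : IsChannel Q) (hP : IsInput P) :
    ∀ d m, m + d = n + 1 → ∀ (a : Fin (n+1) → A) (b : Fin (n+1) → B),
    cmarg (joint Q P) m m a b
      = ∏ j ∈ Finset.univ.filter (fun j : Fin (n+1) => (j:ℕ) < m), (Q j a b * P j a b) := by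
  intro d
  induction d with
  | zero =>
    intro m hm a b
    have hm' : m = n + 1 := by omega
    subst hm'
    have hcond : ∀ (a' : Fin (n+1) → A) (b' : Fin (n+1) → B),
        ((∀ j : Fin (n+1), (j:ℕ) < n + 1 → a' j = a j) ∧
          (∀ j : Fin (n+1), (j:ℕ) < n + 1 → b' j = b j)) ↔ (a' = a ∧ b' = b) := by
      intro a' b'
      constructor
      · rintro ⟨h1, h2⟩
        exact ⟨funext fun j => h1 j j.isLt, funext fun j => h2 j j.isLt⟩
      · rintro ⟨rfl, rfl⟩
        exact ⟨fun _ _ => rfl, fun _ _ => rfl⟩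
    have hfilter : (Finset.univ.filter fun j : Fin (n+1) => (j:ℕ) < n + 1) = Finset.univ := by
      ext j; simp [Nat.lt_succ_iff.mp j.isLt]
    rw [hfilter]
    unfold cmarg
    rw [Finset.sum_congr rfl fun a' _ => Finset.sum_congr rfl fun b' _ =>
      if_congr (hcond a' b') rfl rfl]
    simp [ite_and, Finset.sum_ite_eq', joint]
  | succ d ih =>
    intro m hm a b
    have hmlt : m < n + 1 := by omega
    set i : Fin (n+1) := ⟨m, hmlt⟩ with hi
    -- Step B: sum out b_m
    have hB : ∀ (a : Fin (n+1) → A) (b : Fin (n+1) → B),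
        cmarg (joint Q P) (m+1) m a b
          = P i a b * ∏ j ∈ Finset.univ.filter (fun j : Fin (n+1) => (j:ℕ) < m),
              (Q j a b * P j a b) := by
      intro a b
      have step : ∀ (a' : Fin (n+1) → A) (b' : Fin (n+1) → B),
          (if (∀ j : Fin (n+1), (j:ℕ) < m+1 → a' j = a j) ∧
              (∀ j : Fin (n+1), (j:ℕ) < m → b' j = b j) then joint Q P a' b' else 0)
          = ∑ y : B, (if (∀ j : Fin (n+1), (j:ℕ) < m+1 → a' j = a j) ∧
              (∀ j : Fin (n+1), (j:ℕ) < m+1 → b' j = Function.update b i y j)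
              then joint Q P a' b' else 0) := by
        intro a' b'
        have h2 : ∀ y : B, ((∀ j : Fin (n+1), (j:ℕ) < m+1 → a' j = a j) ∧
            (∀ j : Fin (n+1), (j:ℕ) < m+1 → b' j = Function.update b i y j))
            ↔ (((∀ j : Fin (n+1), (j:ℕ) < m+1 → a' j = a j) ∧
               (∀ j : Fin (n+1), (j:ℕ) < m → b' j = b j)) ∧ b' i = y) := by
          intro y
          rw [cond_split hmlt b' b y]
          tauto
        rw [Finset.sum_congr rfl fun y _ => if_congr (h2 y) rfl rfl]
        exact (sum_pick (b' i) (fun _ => joint Q P a' b')).symm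
      unfold cmarg
      rw [Finset.sum_congr rfl fun a' _ => Finset.sum_congr rfl fun b' _ => step a' b']
      rw [Finset.sum_congr rfl fun a' (_ : a' ∈ Finset.univ) => Finset.sum_comm, Finset.sum_comm]
      have hIH : ∀ y : B, (∑ a' : Fin (n+1) → A, ∑ b' : Fin (n+1) → B,
          if (∀ j : Fin (n+1), (j:ℕ) < m+1 → a' j = a j) ∧
             (∀ j : Fin (n+1), (j:ℕ) < m+1 → b' j = Function.update b i y j)
          then joint Q P a' b' else 0)
          = ∏ j ∈ Finset.univ.filter (fun j : Fin (n+1) => (j:ℕ) < m + 1),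
              (Q j a (Function.update b i y) * P j a (Function.update b i y)) := by
        intro y
        exact ih (m+1) (by omega) a (Function.update b i y)
      rw [Finset.sum_congr rfl fun y _ => hIH y]
      have hexp : ∀ y : B,
          (∏ j ∈ Finset.univ.filter (fun j : Fin (n+1) => (j:ℕ) < m + 1),
            (Q j a (Function.update b i y) * P j a (Function.update b i y)))
          = Q i a (Function.update b i y) * (P i a b *
            ∏ j ∈ Finset.univ.filter (fun j : Fin (n+1) => (j:ℕ) < m), (Q j a b * P j a b)) := by
        intro y
        rw [filter_lt_succ hmlt, Finset.prod_insert (not_mem_filter_lt hmlt)]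
        have hPi : P i a (Function.update b i y) = P i a b := by
          refine hP.2.2 i a a _ b (fun j _ => rfl) (fun j hj => ?_)
          exact Function.update_of_ne
            (Fin.ne_of_val_ne (i := j) (j := i) (show (j:ℕ) ≠ m from Nat.ne_of_lt hj)) y b
        have hprod : ∀ j ∈ Finset.univ.filter (fun j : Fin (n+1) => (j:ℕ) < m),
            Q j a (Function.update b i y) * P j a (Function.update b i y)
              = Q j a b * P j a b := by
          intro j hj
          have hjm : (j:ℕ) < m := by simpa using hj
          have hup : ∀ k : Fin (n+1), (k:ℕ) ≤ (j:ℕ) → Function.update b i y k = b k := by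
            intro k hk
            exact Function.update_of_ne
              (Fin.ne_of_val_ne (i := k) (j := i) (show (k:ℕ) ≠ m by omega)) y b
          rw [hQ.2.2 j a a _ b (fun _ _ => rfl) hup,
            hP.2.2 j a a _ b (fun _ _ => rfl) (fun k hk => hup k (by omega))]
        rw [Finset.prod_congr rfl hprod, hPi, mul_assoc]
      rw [Finset.sum_congr rfl fun y _ => hexp y, ← Finset.sum_mul, hQ.2.1 i a b, one_mul]
    -- Step A: sum out a_m
    have stepA : ∀ (a' : Fin (n+1) → A) (b' : Fin (n+1) → B),
        (if (∀ j : Fin (n+1), (j:ℕ) < m → a' j = a j) ∧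
            (∀ j : Fin (n+1), (j:ℕ) < m → b' j = b j) then joint Q P a' b' else 0)
        = ∑ x : A, (if (∀ j : Fin (n+1), (j:ℕ) < m+1 → a' j = Function.update a i x j) ∧
            (∀ j : Fin (n+1), (j:ℕ) < m → b' j = b j) then joint Q P a' b' else 0) := by
      intro a' b'
      have h2 : ∀ x : A, ((∀ j : Fin (n+1), (j:ℕ) < m+1 → a' j = Function.update a i x j) ∧
          (∀ j : Fin (n+1), (j:ℕ) < m → b' j = b j))
          ↔ (((∀ j : Fin (n+1), (j:ℕ) < m → a' j = a j) ∧
             (∀ j : Fin (n+1), (j:ℕ) < m → b' j = b j)) ∧ a' i = x) := by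
        intro x
        rw [cond_split hmlt a' a x]
        tauto
      rw [Finset.sum_congr rfl fun x _ => if_congr (h2 x) rfl rfl]
      exact (sum_pick (a' i) (fun _ => joint Q P a' b')).symm
    unfold cmarg
    rw [Finset.sum_congr rfl fun a' _ => Finset.sum_congr rfl fun b' _ => stepA a' b']
    rw [Finset.sum_congr rfl fun a' (_ : a' ∈ Finset.univ) => Finset.sum_comm, Finset.sum_comm]
    have hBx : ∀ x : A, (∑ a' : Fin (n+1) → A, ∑ b' : Fin (n+1) → B,
        if (∀ j : Fin (n+1), (j:ℕ) < m+1 → a' j = Function.update a i x j) ∧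
           (∀ j : Fin (n+1), (j:ℕ) < m → b' j = b j) then joint Q P a' b' else 0)
        = P i (Function.update a i x) b *
            ∏ j ∈ Finset.univ.filter (fun j : Fin (n+1) => (j:ℕ) < m),
              (Q j (Function.update a i x) b * P j (Function.update a i x) b) := by
      intro x
      exact hB (Function.update a i x) b
    rw [Finset.sum_congr rfl fun x _ => hBx x]
    have hexp2 : ∀ x : A, P i (Function.update a i x) b *
        (∏ j ∈ Finset.univ.filter (fun j : Fin (n+1) => (j:ℕ) < m),
          (Q j (Function.update a i x) b * P j (Function.update a i x) b))
        = P i (Function.update a i x) b *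
          ∏ j ∈ Finset.univ.filter (fun j : Fin (n+1) => (j:ℕ) < m), (Q j a b * P j a b) := by
      intro x
      congr 1
      refine Finset.prod_congr rfl fun j hj => ?_
      have hjm : (j:ℕ) < m := by simpa using hj
      have hup : ∀ k : Fin (n+1), (k:ℕ) ≤ (j:ℕ) → Function.update a i x k = a k := by
        intro k hk
        exact Function.update_of_ne
          (Fin.ne_of_val_ne (i := k) (j := i) (show (k:ℕ) ≠ m by omega)) x a
      rw [hQ.2.2 j _ a b b hup (fun _ _ => rfl), hP.2.2 j _ a b b hup (fun _ _ => rfl)]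
    rw [Finset.sum_congr rfl fun x _ => hexp2 x, ← Finset.sum_mul, hP.2.1 i a b, one_mul]

end Chain
section Chain2
variable {n : ℕ} {A B : Type} [Fintype A] [Fintype B] [DecidableEq A] [DecidableEq B]

lemma chainB {Q P : Fin (n+1) → (Fin (n+1) → A) → (Fin (n+1) → B) → ℝ}
    (hQ : IsChannel Q) (hP : IsInput P) (i : Fin (n+1))
    (a : Fin (n+1) → A) (b : Fin (n+1) → B) :
    cmarg (joint Q P) ((i:ℕ)+1) (i:ℕ) a b
      = P i a b * ∏ j ∈ Finset.univ.filter (fun j : Fin (n+1) => (j:ℕ) < (i:ℕ)),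
          (Q j a b * P j a b) := by
  obtain ⟨m, hmlt⟩ := i
  simp only [Fin.val_mk] at *
  set i : Fin (n+1) := ⟨m, hmlt⟩ with hi
  have step : ∀ (a' : Fin (n+1) → A) (b' : Fin (n+1) → B),
      (if (∀ j : Fin (n+1), (j:ℕ) < m+1 → a' j = a j) ∧
          (∀ j : Fin (n+1), (j:ℕ) < m → b' j = b j) then joint Q P a' b' else 0)
      = ∑ y : B, (if (∀ j : Fin (n+1), (j:ℕ) < m+1 → a' j = a j) ∧
          (∀ j : Fin (n+1), (j:ℕ) < m+1 → b' j = Function.update b i y j)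
          then joint Q P a' b' else 0) := by
    intro a' b'
    have h2 : ∀ y : B, ((∀ j : Fin (n+1), (j:ℕ) < m+1 → a' j = a j) ∧
        (∀ j : Fin (n+1), (j:ℕ) < m+1 → b' j = Function.update b i y j))
        ↔ (((∀ j : Fin (n+1), (j:ℕ) < m+1 → a' j = a j) ∧
           (∀ j : Fin (n+1), (j:ℕ) < m → b' j = b j)) ∧ b' i = y) := by
      intro y
      rw [cond_split hmlt b' b y]
      tauto
    rw [Finset.sum_congr rfl fun y _ => if_congr (h2 y) rfl rfl]
    exact (sum_pick (b' i) (fun _ => joint Q P a' b')).symm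
  unfold cmarg
  rw [Finset.sum_congr rfl fun a' _ => Finset.sum_congr rfl fun b' _ => step a' b']
  rw [Finset.sum_congr rfl fun a' (_ : a' ∈ Finset.univ) => Finset.sum_comm, Finset.sum_comm]
  have hIH : ∀ y : B, (∑ a' : Fin (n+1) → A, ∑ b' : Fin (n+1) → B,
      if (∀ j : Fin (n+1), (j:ℕ) < m+1 → a' j = a j) ∧
         (∀ j : Fin (n+1), (j:ℕ) < m+1 → b' j = Function.update b i y j)
      then joint Q P a' b' else 0)
      = ∏ j ∈ Finset.univ.filter (fun j : Fin (n+1) => (j:ℕ) < m + 1),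
          (Q j a (Function.update b i y) * P j a (Function.update b i y)) := by
    intro y
    exact chainA hQ hP (n - m) (m+1) (by omega) a (Function.update b i y)
  rw [Finset.sum_congr rfl fun y _ => hIH y]
  have hexp : ∀ y : B,
      (∏ j ∈ Finset.univ.filter (fun j : Fin (n+1) => (j:ℕ) < m + 1),
        (Q j a (Function.update b i y) * P j a (Function.update b i y)))
      = Q i a (Function.update b i y) * (P i a b *
        ∏ j ∈ Finset.univ.filter (fun j : Fin (n+1) => (j:ℕ) < m), (Q j a b * P j a b)) := by
    intro y
    rw [filter_lt_succ hmlt, Finset.prod_insert (not_mem_filter_lt hmlt)]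
    have hPi : P i a (Function.update b i y) = P i a b := by
      refine hP.2.2 i a a _ b (fun j _ => rfl) (fun j hj => ?_)
      exact Function.update_of_ne
        (Fin.ne_of_val_ne (i := j) (j := i) (show (j:ℕ) ≠ m from Nat.ne_of_lt hj)) y b
    have hprod : ∀ j ∈ Finset.univ.filter (fun j : Fin (n+1) => (j:ℕ) < m),
        Q j a (Function.update b i y) * P j a (Function.update b i y)
          = Q j a b * P j a b := by
      intro j hj
      have hjm : (j:ℕ) < m := by simpa using hj
      have hup : ∀ k : Fin (n+1), (k:ℕ) ≤ (j:ℕ) → Function.update b i y k = b k := by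
        intro k hk
        exact Function.update_of_ne
          (Fin.ne_of_val_ne (i := k) (j := i) (show (k:ℕ) ≠ m by omega)) y b
      rw [hQ.2.2 j a a _ b (fun _ _ => rfl) hup,
        hP.2.2 j a a _ b (fun _ _ => rfl) (fun k hk => hup k (by omega))]
    rw [Finset.prod_congr rfl hprod, hPi, mul_assoc]
  rw [Finset.sum_congr rfl fun y _ => hexp y, ← Finset.sum_mul, hQ.2.1 i a b, one_mul]

lemma mass {Q P : Fin (n+1) → (Fin (n+1) → A) → (Fin (n+1) → B) → ℝ}
    (hQ : IsChannel Q) (hP : IsInput P) [Nonempty A] [Nonempty B] :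
    ∑ a : Fin (n+1) → A, ∑ b : Fin (n+1) → B, joint Q P a b = 1 := by
  have a0 : Fin (n+1) → A := fun _ => Classical.arbitrary A
  have b0 : Fin (n+1) → B := fun _ => Classical.arbitrary B
  have h := chainA hQ hP (n+1) 0 (by omega) a0 b0
  have hfilter : (Finset.univ.filter fun j : Fin (n+1) => (j:ℕ) < 0) = ∅ := by
    ext j; simp
  rw [hfilter, Finset.prod_empty] at h
  unfold cmarg at h
  simpa using h

lemma marg_Le_Le {μ : (Fin (n+1) → A) → (Fin (n+1) → B) → ℝ} (i : Fin (n+1))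
    (a : Fin (n+1) → A) (b : Fin (n+1) → B) :
    marg μ (idxLe n i) (idxLe n i) a b = cmarg μ ((i:ℕ)+1) ((i:ℕ)+1) a b := by
  unfold marg cmarg
  refine Finset.sum_congr rfl fun a' _ => Finset.sum_congr rfl fun b' _ =>
    if_congr (and_congr ?_ ?_) rfl rfl <;>
  · constructor
    · intro h j hj
      exact h j (mem_idxLe.mpr (by omega))
    · intro h j hj
      exact h j (by have := mem_idxLe.mp hj; omega)

lemma marg_Le_Lt {μ : (Fin (n+1) → A) → (Fin (n+1) → B) → ℝ} (i : Fin (n+1))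
    (a : Fin (n+1) → A) (b : Fin (n+1) → B) :
    marg μ (idxLe n i) (idxLt n i) a b = cmarg μ ((i:ℕ)+1) (i:ℕ) a b := by
  unfold marg cmarg
  refine Finset.sum_congr rfl fun a' _ => Finset.sum_congr rfl fun b' _ =>
    if_congr (and_congr ?_ ?_) rfl rfl
  · constructor
    · intro h j hj
      exact h j (mem_idxLe.mpr (by omega))
    · intro h j hj
      exact h j (by have := mem_idxLe.mp hj; omega)
  · constructor
    · intro h j hj
      exact h j (mem_idxLt.mpr hj)
    · intro h j hj
      exact h j (mem_idxLt.mp hj)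

/-- The channel factorization of the prefix marginal. -/
lemma marg_factor {Q P : Fin (n+1) → (Fin (n+1) → A) → (Fin (n+1) → B) → ℝ}
    (hQ : IsChannel Q) (hP : IsInput P) (i : Fin (n+1))
    (a : Fin (n+1) → A) (b : Fin (n+1) → B) :
    marg (joint Q P) (idxLe n i) (idxLe n i) a b
      = Q i a b * marg (joint Q P) (idxLe n i) (idxLt n i) a b := by
  rw [marg_Le_Le, marg_Le_Lt]
  rw [chainA hQ hP (n - (i:ℕ)) ((i:ℕ)+1) (by omega) a b, chainB hQ hP i a b]
  rw [filter_lt_succ i.isLt, Finset.prod_insert (not_mem_filter_lt i.isLt)]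
  have : (⟨(i:ℕ), i.isLt⟩ : Fin (n+1)) = i := Fin.eta i i.isLt
  rw [this]
  ring

end Chain2
section Part2
variable {n : ℕ} {A B : Type} [Fintype A] [Fintype B] [DecidableEq A] [DecidableEq B]

lemma Q_pos_of_joint_pos {Q P : Fin (n+1) → (Fin (n+1) → A) → (Fin (n+1) → B) → ℝ}
    (hQ : IsChannel Q) (i : Fin (n+1)) {a : Fin (n+1) → A} {b : Fin (n+1) → B}
    (h : 0 < joint Q P a b) : 0 < Q i a b := by
  rcases lt_or_eq_of_le (hQ.1 i a b) with h2 | h2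
  · exact h2
  · exfalso
    have : joint Q P a b = 0 :=
      Finset.prod_eq_zero (Finset.mem_univ i) (by rw [← h2, zero_mul])
    rw [this] at h
    exact lt_irrefl 0 h

lemma idxLt_subset_idxLe {i : Fin (n+1)} : idxLt n i ⊆ idxLe n i := fun j hj =>
  mem_idxLe.mpr (le_of_lt (mem_idxLt.mp hj))

/-- Part 2 : the attained value equals the directed information. -/
lemma part2 {Q P : Fin (n+1) → (Fin (n+1) → A) → (Fin (n+1) → B) → ℝ}
    (hQ : IsChannel Q) (hP : IsInput P) :
    (∑ i : Fin (n+1), ∑ a : Fin (n+1) → A, ∑ b : Fin (n+1) → B,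
        joint Q P a b * Real.log (Q i a b / outCond (joint Q P) i b))
      = DI (joint Q P) := by
  set μ := joint Q P with hμdef
  have hμ0 : ∀ a b, 0 ≤ μ a b := joint_nonneg hQ hP
  unfold DI cmi
  refine Finset.sum_congr rfl fun i _ => Finset.sum_congr rfl fun a _ =>
    Finset.sum_congr rfl fun b _ => ?_
  rcases eq_or_lt_of_le (hμ0 a b) with hz | hpos
  · rw [← hz, zero_mul, zero_mul]
  · have hQpos : 0 < Q i a b := Q_pos_of_joint_pos hQ i hpos
    have hM2 : 0 < marg μ (idxLe n i) (idxLt n i) a b :=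
      lt_of_lt_of_le hpos (le_marg hμ0 _ _ a b)
    have hm1 : 0 < margB μ (idxLe n i) b := lt_of_lt_of_le hpos (le_margB hμ0 _ a b)
    have hm2 : 0 < margB μ (idxLt n i) b := lt_of_lt_of_le hpos (le_margB hμ0 _ a b)
    congr 1
    rw [← idxLe_eq_insert i, marg_empty, marg_empty, marg_factor hQ hP i a b]
    have e1 : margB μ (idxLe n i) b ≠ 0 := ne_of_gt hm1
    have e2 : margB μ (idxLt n i) b ≠ 0 := ne_of_gt hm2
    have e3 : marg (joint Q P) (idxLe n i) (idxLt n i) a b ≠ 0 := ne_of_gt hM2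
    unfold outCond
    rw [div_div_eq_mul_div]
    congr 1
    simp only [hμdef] at e1 e2 e3 ⊢
    field_simp

end Part2
section Gibbs
variable {n : ℕ} {A B : Type} [Fintype A] [Fintype B] [DecidableEq A] [DecidableEq B]

lemma gibbs {Q P : Fin (n+1) → (Fin (n+1) → A) → (Fin (n+1) → B) → ℝ}
    (hQ : IsChannel Q) (hP : IsInput P) [Nonempty A] [Nonempty B]
    (i : Fin (n+1)) (V : Fin (n+1) → (Fin (n+1) → B) → ℝ)
    (hV1 : ∀ i b, 0 < V i b)
    (hV2 : ∀ i b, ∑ y : B, V i (Function.update b i y) = 1)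
    (hV3 : ∀ (i : Fin (n+1)) (b b' : Fin (n+1) → B),
      (∀ j : Fin (n+1), (j:ℕ) ≤ (i:ℕ) → b j = b' j) → V i b = V i b') :
    (∑ a : Fin (n+1) → A, ∑ b : Fin (n+1) → B,
        joint Q P a b * Real.log (Q i a b / outCond (joint Q P) i b))
      ≤ ∑ a : Fin (n+1) → A, ∑ b : Fin (n+1) → B,
          joint Q P a b * Real.log (Q i a b / V i b) := by
  set μ := joint Q P with hμdef
  have hμ0 : ∀ a b, 0 ≤ μ a b := joint_nonneg hQ hP
  set f : (Fin (n+1) → B) → ℝ := fun b => V i b / outCond μ i b with hfdef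
  have hfdep : ∀ b b', (∀ j ∈ idxLe n i, b j = b' j) → f b = f b' := by
    intro b b' h
    have h1 : V i b = V i b' := hV3 i b b' (fun j hj => h j (mem_idxLe.mpr hj))
    have h2 : margB μ (idxLe n i) b = margB μ (idxLe n i) b' := margB_congr h
    have h3 : margB μ (idxLt n i) b = margB μ (idxLt n i) b' :=
      margB_congr (fun j hj => h j (idxLt_subset_idxLe hj))
    simp only [hfdef]
    unfold outCond
    rw [h1, h2, h3]
  have hK : (0:ℝ) < (KS (idxLe n i) B : ℝ) := by exact_mod_cast KS_pos (B := B) _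
  have hmass : ∑ a : Fin (n+1) → A, ∑ b : Fin (n+1) → B, μ a b = 1 := mass hQ hP
  -- the normalization sum for V against the < i marginal
  have h3 : ∑ b : Fin (n+1) → B, V i b * margB μ (idxLt n i) b
      = (KS (idxLe n i) B : ℝ) := by
    unfold margB
    have e1 : ∀ b : Fin (n+1) → B,
        V i b * (∑ a' : Fin (n+1) → A, ∑ b' : Fin (n+1) → B,
          if ∀ j ∈ idxLt n i, b' j = b j then μ a' b' else 0)
        = ∑ a' : Fin (n+1) → A, ∑ b' : Fin (n+1) → B,
          (if ∀ j ∈ idxLt n i, b j = b' j then μ a' b' * V i b else 0) := by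
      intro b
      rw [Finset.mul_sum]
      refine Finset.sum_congr rfl fun a' _ => ?_
      rw [Finset.mul_sum]
      refine Finset.sum_congr rfl fun b' _ => ?_
      rw [mul_ite, mul_zero, mul_comm]
      exact if_congr (forall₂_congr fun j hj => eq_comm) rfl rfl
    rw [Finset.sum_congr rfl fun b _ => e1 b, Finset.sum_comm]
    have e2 : ∀ a' : Fin (n+1) → A,
        (∑ b : Fin (n+1) → B, ∑ b' : Fin (n+1) → B,
          if ∀ j ∈ idxLt n i, b j = b' j then μ a' b' * V i b else 0)
        = ∑ b' : Fin (n+1) → B, μ a' b' * (KS (idxLe n i) B : ℝ) := by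
      intro a'
      rw [Finset.sum_comm]
      refine Finset.sum_congr rfl fun b' _ => ?_
      have e3 : ∀ b : Fin (n+1) → B,
          (if ∀ j ∈ idxLt n i, b j = b' j then μ a' b' * V i b else 0)
          = μ a' b' * (if ∀ j ∈ idxLt n i, b j = b' j then V i b else 0) := by
        intro b
        rw [mul_ite, mul_zero]
      rw [Finset.sum_congr rfl fun b _ => e3 b, ← Finset.mul_sum,
        sum_V_kernel i (V i) (hV2 i) (hV3 i) b']
    rw [Finset.sum_congr rfl fun a' _ => e2 a']
    rw [← Finset.sum_comm]
    have : ∀ b' : Fin (n+1) → B, ∑ a' : Fin (n+1) → A, μ a' b' * (KS (idxLe n i) B : ℝ)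
        = (∑ a' : Fin (n+1) → A, μ a' b') * (KS (idxLe n i) B : ℝ) := fun b' =>
      (Finset.sum_mul _ _ _).symm
    rw [Finset.sum_congr rfl fun b' _ => this b', ← Finset.sum_mul, Finset.sum_comm, hmass,
      one_mul]
  -- T ≤ 1
  have hT : ∑ a : Fin (n+1) → A, ∑ b : Fin (n+1) → B, μ a b * f b ≤ 1 := by
    have h1 := sum_margB_mul μ (idxLe n i) f hfdep
    have h2 : ∑ b : Fin (n+1) → B, margB μ (idxLe n i) b * f b
        ≤ ∑ b : Fin (n+1) → B, V i b * margB μ (idxLt n i) b := by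
      refine Finset.sum_le_sum fun b _ => ?_
      rcases eq_or_lt_of_le (margB_nonneg hμ0 (idxLe n i) b) with hz | hpos
      · rw [← hz, zero_mul]
        exact mul_nonneg (le_of_lt (hV1 i b)) (margB_nonneg hμ0 _ b)
      · have hm2 : 0 < margB μ (idxLt n i) b :=
          lt_of_lt_of_le hpos (margB_mono hμ0 idxLt_subset_idxLe b)
        have hfb : f b = V i b * margB μ (idxLt n i) b / margB μ (idxLe n i) b := by
          simp only [hfdef]
          unfold outCond
          rw [div_div_eq_mul_div]
        rw [hfb, mul_comm, div_mul_cancel₀ _ (ne_of_gt hpos)]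
    rw [h3, h1] at h2
    calc ∑ a : Fin (n+1) → A, ∑ b : Fin (n+1) → B, μ a b * f b
        = (KS (idxLe n i) B : ℝ) * (∑ a, ∑ b, μ a b * f b) / (KS (idxLe n i) B : ℝ) := by
          rw [mul_comm, mul_div_assoc, div_self (ne_of_gt hK), mul_one]
      _ ≤ (KS (idxLe n i) B : ℝ) / (KS (idxLe n i) B : ℝ) := by
          exact div_le_div_of_nonneg_right h2 hK.le |>.trans_eq rfl
      _ = 1 := div_self (ne_of_gt hK)
  -- pointwise Gibbs inequality
  have key : ∀ (a : Fin (n+1) → A) (b : Fin (n+1) → B),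
      μ a b * Real.log (Q i a b / outCond μ i b) + (μ a b - μ a b * f b)
        ≤ μ a b * Real.log (Q i a b / V i b) := by
    intro a b
    rcases eq_or_lt_of_le (hμ0 a b) with hz | hpos
    · rw [← hz]; simp
    · have hQpos : 0 < Q i a b := Q_pos_of_joint_pos hQ i (hμdef ▸ hpos)
      have hm1 : 0 < margB μ (idxLe n i) b := lt_of_lt_of_le hpos (le_margB hμ0 _ a b)
      have hm2 : 0 < margB μ (idxLt n i) b := lt_of_lt_of_le hpos (le_margB hμ0 _ a b)
      have hPiC : 0 < outCond μ i b := div_pos hm1 hm2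
      have hV : 0 < V i b := hV1 i b
      have hlog : Real.log (V i b / outCond μ i b) ≤ V i b / outCond μ i b - 1 :=
        Real.log_le_sub_one_of_pos (div_pos hV hPiC)
      rw [Real.log_div (ne_of_gt hV) (ne_of_gt hPiC)] at hlog
      rw [Real.log_div (ne_of_gt hQpos) (ne_of_gt hPiC),
        Real.log_div (ne_of_gt hQpos) (ne_of_gt hV)]
      have hfb : f b = V i b / outCond μ i b := rfl
      have h6 : (1 : ℝ) - f b ≤ Real.log (outCond μ i b) - Real.log (V i b) := by
        rw [hfb]; linarith
      have h7 := mul_le_mul_of_nonneg_left h6 (le_of_lt hpos)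
      nlinarith
  have step : ∑ a : Fin (n+1) → A, ∑ b : Fin (n+1) → B,
      (μ a b * Real.log (Q i a b / outCond μ i b) + (μ a b - μ a b * f b))
      ≤ ∑ a : Fin (n+1) → A, ∑ b : Fin (n+1) → B, μ a b * Real.log (Q i a b / V i b) :=
    Finset.sum_le_sum fun a _ => Finset.sum_le_sum fun b _ => key a b
  have total : (∑ a : Fin (n+1) → A, ∑ b : Fin (n+1) → B,
      (μ a b * Real.log (Q i a b / outCond μ i b) + (μ a b - μ a b * f b)))
      = (∑ a : Fin (n+1) → A, ∑ b : Fin (n+1) → B, μ a b * Real.log (Q i a b / outCond μ i b))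
        + ((∑ a : Fin (n+1) → A, ∑ b : Fin (n+1) → B, μ a b)
          - ∑ a : Fin (n+1) → A, ∑ b : Fin (n+1) → B, μ a b * f b) := by
    rw [Finset.sum_congr rfl (fun a (_ : a ∈ Finset.univ) => Finset.sum_add_distrib),
      Finset.sum_add_distrib,
      Finset.sum_congr rfl (fun a (_ : a ∈ Finset.univ) => Finset.sum_sub_distrib _ _),
      Finset.sum_sub_distrib]
  rw [total, hmass] at step
  linarith

end Gibbs
section Approx
variable {n : ℕ} {A B : Type} [Fintype A] [Fintype B] [DecidableEq A] [DecidableEq B]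

lemma approx {Q P : Fin (n+1) → (Fin (n+1) → A) → (Fin (n+1) → B) → ℝ}
    (hQ : IsChannel Q) (hP : IsInput P) [Nonempty A] [Nonempty B] {δ : ℝ} (hδ : 0 < δ) :
    ∃ V : Fin (n+1) → (Fin (n+1) → B) → ℝ,
      (∀ i b, 0 < V i b) ∧
      (∀ i b, ∑ y : B, V i (Function.update b i y) = 1) ∧
      (∀ (i : Fin (n+1)) (b b' : Fin (n+1) → B),
        (∀ j : Fin (n+1), (j:ℕ) ≤ (i:ℕ) → b j = b' j) → V i b = V i b') ∧
      (∑ i : Fin (n+1), ∑ a : Fin (n+1) → A, ∑ b : Fin (n+1) → B,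
          joint Q P a b * Real.log (Q i a b / V i b))
        ≤ DI (joint Q P) + δ := by
  set μ := joint Q P with hμdef
  have hμ0 : ∀ a b, 0 ≤ μ a b := joint_nonneg hQ hP
  set c : ℝ := (Fintype.card B : ℝ) with hc0
  have hc : 0 < c := by
    simp only [hc0]
    exact_mod_cast Fintype.card_pos
  set ε : ℝ := δ / ((n+1) * c) with hε
  have hεpos : 0 < ε := div_pos hδ (by positivity)
  set Pi0 : Fin (n+1) → (Fin (n+1) → B) → ℝ :=
    fun i b => if 0 < margB μ (idxLt n i) b then outCond μ i b else c⁻¹ with hPi0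
  set V : Fin (n+1) → (Fin (n+1) → B) → ℝ :=
    fun i b => (Pi0 i b + ε) / (1 + c * ε) with hVdef
  have hden : 0 < 1 + c * ε := by positivity
  have hPi0nonneg : ∀ i b, 0 ≤ Pi0 i b := by
    intro i b
    simp only [hPi0]
    split_ifs with h
    · exact div_nonneg (margB_nonneg hμ0 _ b) (margB_nonneg hμ0 _ b)
    · positivity
  have hmup : ∀ (i : Fin (n+1)) (b : Fin (n+1) → B) (y : B),
      margB μ (idxLt n i) (Function.update b i y) = margB μ (idxLt n i) b := by
    intro i b y
    refine margB_congr fun j hj => ?_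
    exact Function.update_of_ne
      (Fin.ne_of_val_ne (Nat.ne_of_lt (mem_idxLt.mp hj))) y b
  have hPi0sum : ∀ i b, ∑ y : B, Pi0 i (Function.update b i y) = 1 := by
    intro i b
    by_cases hpos : 0 < margB μ (idxLt n i) b
    · have e1 : ∀ y : B, Pi0 i (Function.update b i y)
          = margB μ (idxLe n i) (Function.update b i y) / margB μ (idxLt n i) b := by
        intro y
        simp only [hPi0]
        rw [hmup i b y, if_pos hpos]
        unfold outCond
        rw [hmup i b y]
      rw [Finset.sum_congr rfl fun y _ => e1 y, ← Finset.sum_div]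
      rw [idxLe_eq_insert i, margB_sum_insert μ i_not_mem_idxLt b]
      exact div_self (ne_of_gt hpos)
    · have e1 : ∀ y : B, Pi0 i (Function.update b i y) = c⁻¹ := by
        intro y
        simp only [hPi0]
        rw [hmup i b y, if_neg hpos]
      rw [Finset.sum_congr rfl fun y _ => e1 y, Finset.sum_const, Finset.card_univ,
        nsmul_eq_mul]
      exact mul_inv_cancel₀ (ne_of_gt hc)
  refine ⟨V, ?_, ?_, ?_, ?_⟩
  · intro i b
    have := hPi0nonneg i b
    simp only [hVdef]
    positivity
  · intro i b
    simp only [hVdef]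
    rw [← Finset.sum_div, Finset.sum_add_distrib, hPi0sum i b, Finset.sum_const,
      Finset.card_univ, nsmul_eq_mul]
    rw [div_self (ne_of_gt hden)]
  · intro i b b' h
    have e1 : margB μ (idxLe n i) b = margB μ (idxLe n i) b' :=
      margB_congr fun j hj => h j (mem_idxLe.mp hj)
    have e2 : margB μ (idxLt n i) b = margB μ (idxLt n i) b' :=
      margB_congr fun j hj => h j (le_of_lt (mem_idxLt.mp hj))
    simp only [hVdef, hPi0]
    unfold outCond
    rw [e1, e2]
  · -- the value bound
    set L : ℝ := Real.log (1 + c * ε) with hL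
    have hLnonneg : 0 ≤ L := Real.log_nonneg (by nlinarith)
    have hLle : L ≤ c * ε := by
      have := Real.log_le_sub_one_of_pos hden
      linarith
    have key : ∀ (i : Fin (n+1)) (a : Fin (n+1) → A) (b : Fin (n+1) → B),
        μ a b * Real.log (Q i a b / V i b)
          ≤ μ a b * Real.log (Q i a b / outCond μ i b) + μ a b * L := by
      intro i a b
      rcases eq_or_lt_of_le (hμ0 a b) with hz | hpos
      · rw [← hz]; simp
      · have hQpos : 0 < Q i a b := Q_pos_of_joint_pos hQ i (hμdef ▸ hpos)
        have hm1 : 0 < margB μ (idxLe n i) b := lt_of_lt_of_le hpos (le_margB hμ0 _ a b)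
        have hm2 : 0 < margB μ (idxLt n i) b := lt_of_lt_of_le hpos (le_margB hμ0 _ a b)
        have hPiC : 0 < outCond μ i b := div_pos hm1 hm2
        have hVb : V i b = (outCond μ i b + ε) / (1 + c * ε) := by
          simp only [hVdef, hPi0]
          rw [if_pos hm2]
        have hVpos : 0 < V i b := by rw [hVb]; positivity
        have hlog1 : Real.log (outCond μ i b) ≤ Real.log (outCond μ i b + ε) :=
          Real.log_le_log hPiC (by linarith)
        have hlogV : Real.log (V i b) = Real.log (outCond μ i b + ε) - L := by
          rw [hVb, Real.log_div (by positivity) (ne_of_gt hden), hL]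
        rw [Real.log_div (ne_of_gt hQpos) (ne_of_gt hVpos),
          Real.log_div (ne_of_gt hQpos) (ne_of_gt hPiC), hlogV]
        have h7 : Real.log (Q i a b) - (Real.log (outCond μ i b + ε) - L)
            ≤ Real.log (Q i a b) - Real.log (outCond μ i b) + L := by linarith
        have h8 := mul_le_mul_of_nonneg_left h7 (le_of_lt hpos)
        nlinarith [h8]
    -- summing the pointwise bound
    have step : ∀ i : Fin (n+1),
        (∑ a : Fin (n+1) → A, ∑ b : Fin (n+1) → B, μ a b * Real.log (Q i a b / V i b))
          ≤ (∑ a : Fin (n+1) → A, ∑ b : Fin (n+1) → B,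
              μ a b * Real.log (Q i a b / outCond μ i b)) + L := by
      intro i
      have h1 : (∑ a : Fin (n+1) → A, ∑ b : Fin (n+1) → B, μ a b * Real.log (Q i a b / V i b))
          ≤ ∑ a : Fin (n+1) → A, ∑ b : Fin (n+1) → B,
              (μ a b * Real.log (Q i a b / outCond μ i b) + μ a b * L) :=
        Finset.sum_le_sum fun a _ => Finset.sum_le_sum fun b _ => key i a b
      have h2 : ∑ a : Fin (n+1) → A, ∑ b : Fin (n+1) → B,
          (μ a b * Real.log (Q i a b / outCond μ i b) + μ a b * L)
          = (∑ a : Fin (n+1) → A, ∑ b : Fin (n+1) → B,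
              μ a b * Real.log (Q i a b / outCond μ i b))
            + (∑ a : Fin (n+1) → A, ∑ b : Fin (n+1) → B, μ a b) * L := by
        rw [Finset.sum_congr rfl (fun a (_ : a ∈ Finset.univ) => Finset.sum_add_distrib),
          Finset.sum_add_distrib, Finset.sum_mul]
        congr 1
        refine Finset.sum_congr rfl fun a _ => ?_
        rw [Finset.sum_mul]
      rw [h2, mass hQ hP, one_mul] at h1
      exact h1
    have final : (∑ i : Fin (n+1), ∑ a : Fin (n+1) → A, ∑ b : Fin (n+1) → B,
        μ a b * Real.log (Q i a b / V i b))
        ≤ (∑ i : Fin (n+1), ∑ a : Fin (n+1) → A, ∑ b : Fin (n+1) → B,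
            μ a b * Real.log (Q i a b / outCond μ i b)) + (n+1) * L := by
      have h3 := Finset.sum_le_sum fun i (_ : i ∈ (Finset.univ : Finset (Fin (n+1)))) => step i
      rw [Finset.sum_add_distrib, Finset.sum_const, Finset.card_univ, Fintype.card_fin,
        nsmul_eq_mul] at h3
      exact_mod_cast h3
    rw [part2 hQ hP] at final
    refine final.trans ?_
    have h4 : ((n:ℝ)+1) * L ≤ δ := by
      have h5 : ((n:ℝ)+1) * L ≤ ((n:ℝ)+1) * (c * ε) :=
        mul_le_mul_of_nonneg_left hLle (by positivity)
      have h6 : ((n:ℝ)+1) * (c * ε) = δ := by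
        rw [hε]
        field_simp
      linarith
    linarith
end Approx
/-- the variational equality — directed information equals the infimum,
over strictly positive output kernels `V_i(b_i|b^{i-1})`, of `∑ E[log(Q/V)]`, and the
infimum is attained at `V_i = Π_i`. -/
theorem stmt1 (Q P : Fin (n+1) → (Fin (n+1) → A) → (Fin (n+1) → B) → ℝ)
    (hQ : IsChannel Q) (hP : IsInput P) :
    DI (joint Q P)
      = sInf {x : ℝ | ∃ V : Fin (n+1) → (Fin (n+1) → B) → ℝ,
          (∀ i b, 0 < V i b) ∧
          (∀ i b, ∑ y : B, V i (Function.update b i y) = 1) ∧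
          (∀ (i : Fin (n+1)) (b b' : Fin (n+1) → B),
            (∀ j : Fin (n+1), (j:ℕ) ≤ (i:ℕ) → b j = b' j) → V i b = V i b') ∧
          x = ∑ i : Fin (n+1), ∑ a : Fin (n+1) → A, ∑ b : Fin (n+1) → B,
                joint Q P a b * Real.log (Q i a b / V i b)}
    ∧ (∑ i : Fin (n+1), ∑ a : Fin (n+1) → A, ∑ b : Fin (n+1) → B,
          joint Q P a b * Real.log (Q i a b / outCond (joint Q P) i b))
        = DI (joint Q P) := by

  constructor
  · -- the variational (infimum) characterization
    by_cases hAB : Nonempty A ∧ Nonempty B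
    · obtain ⟨hA, hB⟩ := hAB
      have hlow : ∀ x ∈ {x : ℝ | ∃ V : Fin (n+1) → (Fin (n+1) → B) → ℝ,
          (∀ i b, 0 < V i b) ∧
          (∀ i b, ∑ y : B, V i (Function.update b i y) = 1) ∧
          (∀ (i : Fin (n+1)) (b b' : Fin (n+1) → B),
            (∀ j : Fin (n+1), (j:ℕ) ≤ (i:ℕ) → b j = b' j) → V i b = V i b') ∧
          x = ∑ i : Fin (n+1), ∑ a : Fin (n+1) → A, ∑ b : Fin (n+1) → B,
                joint Q P a b * Real.log (Q i a b / V i b)}, DI (joint Q P) ≤ x := by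
        rintro x ⟨V, hV1, hV2, hV3, rfl⟩
        rw [← part2 hQ hP]
        exact Finset.sum_le_sum fun i _ => gibbs hQ hP i V hV1 hV2 hV3
      have happrox : ∀ δ : ℝ, 0 < δ → ∃ x ∈ {x : ℝ | ∃ V : Fin (n+1) → (Fin (n+1) → B) → ℝ,
          (∀ i b, 0 < V i b) ∧
          (∀ i b, ∑ y : B, V i (Function.update b i y) = 1) ∧
          (∀ (i : Fin (n+1)) (b b' : Fin (n+1) → B),
            (∀ j : Fin (n+1), (j:ℕ) ≤ (i:ℕ) → b j = b' j) → V i b = V i b') ∧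
          x = ∑ i : Fin (n+1), ∑ a : Fin (n+1) → A, ∑ b : Fin (n+1) → B,
                joint Q P a b * Real.log (Q i a b / V i b)}, x ≤ DI (joint Q P) + δ := by
        intro δ hδ
        obtain ⟨V, h1, h2, h3, h4⟩ := approx hQ hP (δ := δ) hδ
        exact ⟨_, ⟨V, h1, h2, h3, rfl⟩, h4⟩
      obtain ⟨x₀, hx₀, _⟩ := happrox 1 one_pos
      have hne : Set.Nonempty {x : ℝ | ∃ V : Fin (n+1) → (Fin (n+1) → B) → ℝ,
          (∀ i b, 0 < V i b) ∧
          (∀ i b, ∑ y : B, V i (Function.update b i y) = 1) ∧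
          (∀ (i : Fin (n+1)) (b b' : Fin (n+1) → B),
            (∀ j : Fin (n+1), (j:ℕ) ≤ (i:ℕ) → b j = b' j) → V i b = V i b') ∧
          x = ∑ i : Fin (n+1), ∑ a : Fin (n+1) → A, ∑ b : Fin (n+1) → B,
                joint Q P a b * Real.log (Q i a b / V i b)} := ⟨x₀, hx₀⟩
      refine le_antisymm (le_csInf hne hlow) ?_
      refine le_of_forall_pos_le_add fun δ hδ => ?_
      obtain ⟨x, hx, hxle⟩ := happrox δ hδ
      exact (csInf_le ⟨DI (joint Q P), hlow⟩ hx).trans hxle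
    · -- degenerate case: one of the alphabets is empty
      have hdeg : IsEmpty (Fin (n+1) → A) ∨ IsEmpty (Fin (n+1) → B) := by
        rcases not_and_or.mp hAB with h | h
        · exact Or.inl ⟨fun f => (not_nonempty_iff.mp h).false (f 0)⟩
        · exact Or.inr ⟨fun f => (not_nonempty_iff.mp h).false (f 0)⟩
      have hzero : ∀ g : (Fin (n+1) → A) → (Fin (n+1) → B) → ℝ,
          ∑ a : Fin (n+1) → A, ∑ b : Fin (n+1) → B, g a b = 0 := by
        intro g
        rcases hdeg with h | h
        · haveI := h
          rw [Finset.univ_eq_empty, Finset.sum_empty]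
        · haveI := h
          refine Finset.sum_eq_zero fun a _ => ?_
          rw [Finset.univ_eq_empty, Finset.sum_empty]
      have hDI0 : DI (joint Q P) = 0 := by
        unfold DI cmi
        exact Finset.sum_eq_zero fun i _ => hzero _
      have hSet : {x : ℝ | ∃ V : Fin (n+1) → (Fin (n+1) → B) → ℝ,
          (∀ i b, 0 < V i b) ∧
          (∀ i b, ∑ y : B, V i (Function.update b i y) = 1) ∧
          (∀ (i : Fin (n+1)) (b b' : Fin (n+1) → B),
            (∀ j : Fin (n+1), (j:ℕ) ≤ (i:ℕ) → b j = b' j) → V i b = V i b') ∧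
          x = ∑ i : Fin (n+1), ∑ a : Fin (n+1) → A, ∑ b : Fin (n+1) → B,
                joint Q P a b * Real.log (Q i a b / V i b)} = {0} := by
        ext x
        simp only [Set.mem_setOf_eq, Set.mem_singleton_iff]
        constructor
        · rintro ⟨V, h1, h2, h3, rfl⟩
          exact Finset.sum_eq_zero fun i _ => hzero _
        · rintro rfl
          refine ⟨fun _ _ => (Fintype.card B : ℝ)⁻¹, ?_, ?_, fun _ _ _ _ => rfl, ?_⟩
          · intro i b
            haveI : Nonempty B := ⟨b 0⟩
            have : (0:ℝ) < (Fintype.card B : ℝ) := by exact_mod_cast Fintype.card_pos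
            exact inv_pos.mpr this
          · intro i b
            haveI : Nonempty B := ⟨b 0⟩
            rw [Finset.sum_const, Finset.card_univ, nsmul_eq_mul]
            refine mul_inv_cancel₀ ?_
            exact_mod_cast Fintype.card_ne_zero
          · exact (Finset.sum_eq_zero fun i _ => hzero _).symm
      rw [hDI0, hSet, csInf_singleton]
  · exact part2 hQ hP
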